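/- arXiv:2108.00102 — 2 statements merged into one kernel-verified Lean document; each statement's English description precedes it below -/
import Mathlib

section
/- Let R be a finite simple graph with no isolated vertices. Then there exists a collection 𝒰 of vertex-disjoint connected subgraphs of R such that: (1) every vertex of R belongs to exactly one subgraph of 𝒰; (2) every subgraph in 𝒰 contains at least 2 vertices; and (3) every subgraph in 𝒰 has hop (unweighted) diameter at most 4. -/
/-- Any finite simple graph with no isolated vertices admits a partition of its vertex set
into connected induced subgraphs, each with at least 2 vertices and hop diameter at most 4. -/
theorem stmt2 {V : Type*} [Fintype V] (R : SimpleGraph V) (hiso : ∀ v, ∃ u, R.Adj v u) :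
    ∃ 𝒰 : Set (Set V),
      (∀ v : V, ∃! S, S ∈ 𝒰 ∧ v ∈ S) ∧
      (∀ S ∈ 𝒰, (R.induce S).Connected ∧ 2 ≤ S.ncard ∧
        ∀ x y : S, (R.induce S).dist x y ≤ 4) := by
  classical
  -- maximal matching
  obtain ⟨M, hM, hmax⟩ := Set.Finite.exists_maximalFor (id : Set (Set V) → Set (Set V))
    {M | (∀ p ∈ M, ∃ a b, R.Adj a b ∧ p = {a, b}) ∧ M.PairwiseDisjoint id}
    (Set.toFinite _) ⟨∅, by simp, by simp⟩
  obtain ⟨hMe, hMd⟩ := hM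
  set C : Set V := ⋃₀ M with hC
  -- every uncovered vertex has a neighbor in some matched pair
  have hcov : ∀ v, v ∉ C → ∃ p ∈ M, ∃ u ∈ p, R.Adj v u := by
    intro v hv
    obtain ⟨u, hadj⟩ := hiso v
    by_cases hu : u ∈ C
    · obtain ⟨p, hp, hup⟩ := hu
      exact ⟨p, hp, u, hup, hadj⟩
    · exfalso
      have hnm : ({v, u} : Set V) ∉ M := fun h => hv ⟨_, h, Or.inl rfl⟩
      have hmem : insert ({v, u} : Set V) M ∈
          {M | (∀ p ∈ M, ∃ a b, R.Adj a b ∧ p = {a, b}) ∧ M.PairwiseDisjoint id} := by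
        constructor
        · rintro p (rfl | hp)
          · exact ⟨v, u, hadj, rfl⟩
          · exact hMe p hp
        · refine hMd.insert ?_
          intro q hq _
          rw [Set.disjoint_left]
          rintro x (rfl | rfl) hxq
          · exact hv ⟨q, hq, hxq⟩
          · exact hu ⟨q, hq, hxq⟩
      have := hmax hmem (Set.subset_insert _ _)
      simp only [id] at this
      exact hnm (this (Set.mem_insert _ _))
  -- assign each vertex to a part
  have hpart : ∀ v : V, ∃ p ∈ M, (v ∈ C → v ∈ p) ∧ (v ∉ C → ∃ u ∈ p, R.Adj v u) := by
    intro v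
    by_cases h : v ∈ C
    · obtain ⟨p, hp, hvp⟩ := id h
      exact ⟨p, hp, fun _ => hvp, fun h' => absurd h h'⟩
    · obtain ⟨p, hp, hu⟩ := hcov v h
      exact ⟨p, hp, fun h' => absurd h' h, fun _ => hu⟩
  choose part hpartM hpartC hpartN using hpart
  -- vertices in a matched pair are assigned to that pair
  have hpart_eq : ∀ p ∈ M, ∀ v ∈ p, part v = p := by
    intro p hp v hv
    have hvC : v ∈ C := ⟨p, hp, hv⟩
    by_contra hne
    exact Set.disjoint_left.mp (hMd (hpartM v) hp hne) (hpartC v hvC) hv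
  refine ⟨(fun p => {v | part v = p}) '' M, ?_, ?_⟩
  · intro v
    refine ⟨{w | part w = part v}, ⟨⟨part v, hpartM v, rfl⟩, rfl⟩, ?_⟩
    rintro S ⟨⟨q, _, rfl⟩, hv⟩
    simp only [Set.mem_setOf_eq] at hv
    rw [hv]
  · rintro S ⟨p, hp, rfl⟩
    obtain ⟨a, b, hab, rfl⟩ := hMe p hp
    beta_reduce
    set S : Set V := {v | part v = {a, b}} with hS
    have ha : a ∈ S := hpart_eq _ hp a (Or.inl rfl)
    have hb : b ∈ S := hpart_eq _ hp b (Or.inr rfl)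
    have hmem : ∀ x ∈ S, x = a ∨ x = b ∨ R.Adj x a ∨ R.Adj x b := by
      intro x hx
      by_cases hxC : x ∈ C
      · have := hpartC x hxC
        rw [hx] at this
        rcases this with h | h
        · exact Or.inl h
        · exact Or.inr (Or.inl h)
      · obtain ⟨u, hu, hadj⟩ := hpartN x hxC
        rw [hx] at hu
        rcases hu with rfl | rfl
        · exact Or.inr (Or.inr (Or.inl hadj))
        · exact Or.inr (Or.inr (Or.inr hadj))
    set A : ↥S := ⟨a, ha⟩ with hA
    set B : ↥S := ⟨b, hb⟩ with hB
    have hBA : (R.induce S).Adj B A := hab.symm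
    -- every vertex has a short walk to A
    have key : ∀ x : ↥S, ∃ w : (R.induce S).Walk x A, w.length ≤ 2 := by
      intro x
      by_cases hxA : x = A
      · subst hxA; exact ⟨SimpleGraph.Walk.nil, by simp⟩
      · rcases hmem x.1 x.2 with h | h | h | h
        · exact absurd (Subtype.ext h) hxA
        · have hadj : (R.induce S).Adj x A := by
            show R.Adj x.1 a
            rw [h]; exact hab.symm
          exact ⟨hadj.toWalk, by simp⟩
        · have hadj : (R.induce S).Adj x A := h
          exact ⟨hadj.toWalk, by simp⟩
        · have hadj : (R.induce S).Adj x B := h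
          exact ⟨SimpleGraph.Walk.cons hadj hBA.toWalk, by simp⟩
    refine ⟨?_, ?_, ?_⟩
    · rw [SimpleGraph.connected_iff]
      refine ⟨?_, ⟨A⟩⟩
      intro x y
      obtain ⟨wx, _⟩ := key x
      obtain ⟨wy, _⟩ := key y
      exact wx.reachable.trans wy.reachable.symm
    · have hsub : ({a, b} : Set V) ⊆ S := by
        rintro x (rfl | rfl)
        · exact ha
        · exact hb
      calc (2 : ℕ) = ({a, b} : Set V).ncard := (Set.ncard_pair hab.ne).symm
        _ ≤ S.ncard := Set.ncard_le_ncard hsub (Set.toFinite _)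
    · intro x y
      obtain ⟨wx, hwx⟩ := key x
      obtain ⟨wy, hwy⟩ := key y
      have := SimpleGraph.dist_le (wx.append wy.reverse)
      rw [SimpleGraph.Walk.length_append, SimpleGraph.Walk.length_reverse] at this
      omega
end

section
/- Let P be a weighted path graph in which every edge and every vertex has weight at most δ, and suppose the augmented diameter of P (total weight of all edges and vertices) is at least D. Then P can be partitioned into vertex-disjoint subpaths, each of augmented diameter at least D' and at most 2D' + 3δ, for any D' with δ < D' ≤ D/2. -/
noncomputable def pathW (v e : ℕ → ℝ) (a b : ℕ) : ℝ :=
  (∑ i ∈ Finset.Ico a b, v i) + ∑ i ∈ Finset.Ico a (b - 1), e i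

lemma pathW_single (v e : ℕ → ℝ) (a : ℕ) : pathW v e a (a + 1) = v a := by
  unfold pathW
  rw [show a + 1 - 1 = a from rfl, Finset.Ico_self, Finset.sum_empty,
    Finset.sum_Ico_succ_top le_rfl, Finset.Ico_self, Finset.sum_empty]
  ring

lemma pathW_succ (v e : ℕ → ℝ) {a b : ℕ} (h : a < b) :
    pathW v e a (b + 1) = pathW v e a b + e (b - 1) + v b := by
  unfold pathW
  have h1 : ∑ i ∈ Finset.Ico a (b + 1), v i = (∑ i ∈ Finset.Ico a b, v i) + v b :=
    Finset.sum_Ico_succ_top h.le v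
  have h2 : ∑ i ∈ Finset.Ico a (b + 1 - 1), e i
      = (∑ i ∈ Finset.Ico a (b - 1), e i) + e (b - 1) := by
    rw [show b + 1 - 1 = (b - 1) + 1 by omega]
    exact Finset.sum_Ico_succ_top (by omega) e
  rw [h1, h2]; ring

lemma pathW_split (v e : ℕ → ℝ) {a b N : ℕ} (hab : a < b) (hbN : b < N) :
    pathW v e a N = pathW v e a b + e (b - 1) + pathW v e b N := by
  unfold pathW
  have hv : ∑ i ∈ Finset.Ico a N, v i
      = (∑ i ∈ Finset.Ico a b, v i) + ∑ i ∈ Finset.Ico b N, v i :=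
    (Finset.sum_Ico_consecutive _ hab.le hbN.le).symm
  have he1 : ∑ i ∈ Finset.Ico a (N - 1), e i
      = (∑ i ∈ Finset.Ico a (b - 1), e i) + ∑ i ∈ Finset.Ico (b - 1) (N - 1), e i :=
    (Finset.sum_Ico_consecutive _ (by omega) (by omega)).symm
  have he2 : ∑ i ∈ Finset.Ico (b - 1) (N - 1), e i
      = e (b - 1) + ∑ i ∈ Finset.Ico b (N - 1), e i := by
    rw [Finset.sum_eq_sum_Ico_succ_bot (by omega : b - 1 < N - 1)]
    rw [show b - 1 + 1 = b by omega]
  rw [hv, he1, he2]; ring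

lemma greedy_aux (v e : ℕ → ℝ) (δ D' : ℝ) (hδ : 0 < δ) (hD' : δ < D') (N : ℕ)
    (hv : ∀ i < N, 0 ≤ v i ∧ v i ≤ δ) (he : ∀ i < N - 1, 0 ≤ e i ∧ e i ≤ δ) :
    ∀ k a, N - a ≤ k → a < N → D' ≤ pathW v e a N →
    ∃ (m : ℕ) (c : ℕ → ℕ), 0 < m ∧ c 0 = a ∧ c m = N ∧ (∀ j < m, c j < c (j + 1)) ∧
      ∀ j < m, D' ≤ pathW v e (c j) (c (j + 1)) ∧
        pathW v e (c j) (c (j + 1)) ≤ 2 * D' + 3 * δ := by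
  intro k
  induction k with
  | zero => intro a hk ha _; omega
  | succ k ih =>
    intro a hk ha hW
    by_cases hle : pathW v e a N ≤ 2 * D' + 3 * δ
    · refine ⟨1, fun j => if j = 0 then a else N, one_pos, by simp, by simp, ?_, ?_⟩
      · intro j hj
        interval_cases j
        simpa using ha
      · intro j hj
        interval_cases j
        simpa using ⟨hW, hle⟩
    · classical
      have hP : ∃ b, a < b ∧ D' ≤ pathW v e a b := ⟨N, ha, hW⟩
      obtain ⟨hab, habW⟩ := Nat.find_spec hP
      set b := Nat.find hP with hbdef
      have hbN : b ≤ N := Nat.find_min' hP ⟨ha, hW⟩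
      have hab1 : a + 1 < b := by
        by_contra h
        have hb : b = a + 1 := by omega
        rw [hb, pathW_single] at habW
        have := (hv a (by omega)).2
        linarith
      have hstop : pathW v e a (b - 1) < D' := by
        have hmin := Nat.find_min hP (show b - 1 < b by omega)
        push_neg at hmin
        exact hmin (by omega)
      have hWab : pathW v e a b = pathW v e a (b - 1) + e (b - 2) + v (b - 1) := by
        have := pathW_succ v e (show a < b - 1 by omega)
        rw [show b - 1 + 1 = b by omega, show b - 1 - 1 = b - 2 by omega] at this
        exact this
      have hvb : v (b - 1) ≤ δ := (hv (b - 1) (by omega)).2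
      have heb : e (b - 2) ≤ δ := (he (b - 2) (by omega)).2
      have hupper : pathW v e a b < D' + 2 * δ := by
        rw [hWab]; linarith
      have hbltN : b < N := by
        rcases lt_or_eq_of_le hbN with h | h
        · exact h
        · exfalso; rw [h] at hupper; push_neg at hle; linarith
      have hsplit := pathW_split v e hab hbltN
      have heb1 : e (b - 1) ≤ δ := (he (b - 1) (by omega)).2
      have hrem : D' ≤ pathW v e b N := by
        push_neg at hle
        nlinarith [hsplit, hupper, heb1]
      obtain ⟨m, c, hm, hc0, hcm, hinc, hbounds⟩ :=
        ih b (by omega) hbltN hrem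
      refine ⟨m + 1, fun j => if j = 0 then a else c (j - 1), Nat.succ_pos m,
        by simp, by simp [hcm], ?_, ?_⟩
      · intro j hj
        rcases Nat.eq_zero_or_pos j with h | h
        · subst h; simpa [hc0] using hab
        · have h1 : j ≠ 0 := by omega
          have h2 : j + 1 ≠ 0 := by omega
          simp only [h1, h2, if_neg, if_false]
          have := hinc (j - 1) (by omega)
          rw [show j + 1 - 1 = (j - 1) + 1 by omega]
          exact this
      · intro j hj
        rcases Nat.eq_zero_or_pos j with h | h
        · subst h
          constructor
          · simpa [hc0] using habW
          · have hb2 : pathW v e a b ≤ 2 * D' + 3 * δ := by linarith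
            simpa [hc0] using hb2
        · have h1 : j ≠ 0 := by omega
          have h2 : j + 1 ≠ 0 := by omega
          simp only [h1, h2, if_neg, if_false]
          have := hbounds (j - 1) (by omega)
          rw [show j + 1 - 1 = (j - 1) + 1 by omega]
          exact this

/-- Greedy partition of a weighted path (vertex weights `v i`, edge weights `e i`, all at
most `δ`, with augmented diameter at least `D`) into consecutive subpaths, each of
augmented weight at least `D'` and at most `2D' + 3δ`, for any `δ < D' ≤ D/2`. -/
theorem stmt12 (n : ℕ) (δ D D' : ℝ) (hδ : 0 < δ)
    (v : ℕ → ℝ) (e : ℕ → ℝ)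
    (hv : ∀ i ≤ n, 0 ≤ v i ∧ v i ≤ δ) (he : ∀ i < n, 0 ≤ e i ∧ e i ≤ δ)
    (hD : D ≤ (∑ i ∈ Finset.range (n + 1), v i) + ∑ i ∈ Finset.range n, e i)
    (hD'l : δ < D') (hD'u : D' ≤ D / 2) :
    ∃ (m : ℕ) (c : ℕ → ℕ), 0 < m ∧ c 0 = 0 ∧ c m = n + 1 ∧
      (∀ j < m, c j < c (j + 1)) ∧
      ∀ j < m,
        D' ≤ (∑ i ∈ Finset.Ico (c j) (c (j + 1)), v i) +
              (∑ i ∈ Finset.Ico (c j) (c (j + 1) - 1), e i) ∧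
        (∑ i ∈ Finset.Ico (c j) (c (j + 1)), v i) +
              (∑ i ∈ Finset.Ico (c j) (c (j + 1) - 1), e i) ≤ 2 * D' + 3 * δ := by
  have hW0 : pathW v e 0 (n + 1)
      = (∑ i ∈ Finset.range (n + 1), v i) + ∑ i ∈ Finset.range n, e i := by
    unfold pathW
    rw [show n + 1 - 1 = n from rfl, ← Finset.range_eq_Ico, ← Finset.range_eq_Ico]
  have hstart : D' ≤ pathW v e 0 (n + 1) := by
    rw [hW0]; linarith
  obtain ⟨m, c, hm, hc0, hcm, hinc, hbounds⟩ :=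
    greedy_aux v e δ D' hδ hD'l (n + 1)
      (fun i hi => hv i (by omega)) (fun i hi => he i (by omega))
      (n + 1) 0 (by omega) (by omega) hstart
  exact ⟨m, c, hm, hc0, hcm, hinc, fun j hj => hbounds j hj⟩
end
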